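/- Let r, T > 0, α ∈ (0,1), d ∈ ℕ, and let X ∈ C^{0,1−α}([−r,T],ℝ^d). Then the segment map τ ↦ X_τ from [0,T] into the space of (1−α)-Hölder continuous functions on [−r,0] equipped with the Hölder norm ‖·‖_{1−α,−r,0} is continuous; that is, for every τ ∈ [0,T], ‖X_t − X_τ‖_{1−α,−r,0} → 0 as t → τ in [0,T]. -/

import Mathlib

open Set Filter

noncomputable section

variable {E : Type*} [NormedAddCommGroup E]

/-- Set of `β`-Hölder difference quotients of `f` over the interval `[a,b]`. -/
def ratioSet (β a b : ℝ) (f : ℝ → E) : Set ℝ :=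
  {c | ∃ s t : ℝ, a ≤ s ∧ s < t ∧ t ≤ b ∧ c = ‖f t - f s‖ / (t - s) ^ β}

/-- Set of `β`-Hölder difference quotients of `f` over `[a,b]` with gap less than `δ`. -/
def ratioSetD (β δ a b : ℝ) (f : ℝ → E) : Set ℝ :=
  {c | ∃ s t : ℝ, a ≤ s ∧ s < t ∧ t ≤ b ∧ t - s < δ ∧ c = ‖f t - f s‖ / (t - s) ^ β}

/-- The `β`-Hölder seminorm `[f]_{β,a,b}` of `f` on `[a,b]`. -/
def hSemi (β a b : ℝ) (f : ℝ → E) : ℝ := sSup (ratioSet β a b f)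

/-- The `δ`-restricted `β`-Hölder seminorm `‖f‖_{β,δ,a,b}`. -/
def hSemiD (β δ a b : ℝ) (f : ℝ → E) : ℝ := sSup (ratioSetD β δ a b f)

/-- The sup norm of `f` on `[a,b]`. -/
def hSup (a b : ℝ) (f : ℝ → E) : ℝ := sSup ((fun t => ‖f t‖) '' Icc a b)

/-- The `β`-Hölder norm `‖f‖_{β,a,b} = sup norm + Hölder seminorm`. -/
def hNorm (β a b : ℝ) (f : ℝ → E) : ℝ := hSup a b f + hSemi β a b f

/-- `f` has finite `β`-Hölder norm on `[a,b]`. -/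
def HolderFinite (β a b : ℝ) (f : ℝ → E) : Prop :=
  BddAbove ((fun t => ‖f t‖) '' Icc a b) ∧ BddAbove (ratioSet β a b f)

/-- `f` belongs to the little Hölder space `C^{0,β}([a,b],E)`: finite Hölder norm and
`‖f‖_{β,δ,a,b} → 0` as `δ → 0⁺`. -/
def MemLittleHolder (β a b : ℝ) (f : ℝ → E) : Prop :=
  HolderFinite β a b f ∧
    Tendsto (fun δ => hSemiD β δ a b f) (nhdsWithin 0 (Ioi 0)) (nhds 0)

lemma hSemiD_nonneg (β δ a b : ℝ) (f : ℝ → E) (hβ : 0 < β) : 0 ≤ hSemiD β δ a b f := by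
  apply Real.sSup_nonneg
  rintro c ⟨s, t, _, hst, _, _, rfl⟩
  exact div_nonneg (norm_nonneg _) (Real.rpow_pos_of_pos (by linarith) β).le

lemma holder_pair {β δ a b : ℝ} {f : ℝ → E} (hβ : 0 < β)
    (hbdd : BddAbove (ratioSet β a b f))
    {u v : ℝ} (hu : u ∈ Icc a b) (hv : v ∈ Icc a b) (hδ : |v - u| < δ) :
    ‖f v - f u‖ ≤ hSemiD β δ a b f * |v - u| ^ β := by
  have hb2 : BddAbove (ratioSetD β δ a b f) :=
    hbdd.mono (by rintro c ⟨s, t, h1, h2, h3, _, h5⟩; exact ⟨s, t, h1, h2, h3, h5⟩)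
  have key : ∀ s t : ℝ, s ∈ Icc a b → t ∈ Icc a b → s < t → t - s < δ →
      ‖f t - f s‖ ≤ hSemiD β δ a b f * (t - s) ^ β := by
    intro s t hs ht hst hlt
    have hmem : ‖f t - f s‖ / (t - s) ^ β ∈ ratioSetD β δ a b f :=
      ⟨s, t, hs.1, hst, ht.2, hlt, rfl⟩
    have hle := le_csSup hb2 hmem
    have hpos : (0:ℝ) < (t - s) ^ β := Real.rpow_pos_of_pos (by linarith) β
    calc ‖f t - f s‖ = ‖f t - f s‖ / (t - s) ^ β * (t - s) ^ β := by field_simp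
    _ ≤ hSemiD β δ a b f * (t - s) ^ β := mul_le_mul_of_nonneg_right hle hpos.le
  rcases lt_trichotomy u v with h | h | h
  · have habs : |v - u| = v - u := abs_of_pos (by linarith)
    rw [habs] at hδ ⊢
    exact key u v hu hv h hδ
  · subst h
    simp [Real.zero_rpow hβ.ne']
  · have habs : |v - u| = u - v := by rw [abs_sub_comm]; exact abs_of_pos (by linarith)
    rw [habs] at hδ ⊢
    rw [norm_sub_rev]
    exact key v u hv hu h hδ

theorem stmt7 (r T α : ℝ) (d : ℕ) (hr : 0 < r) (hT : 0 < T) (hα : α ∈ Ioo (0:ℝ) 1)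
    (X : ℝ → EuclideanSpace ℝ (Fin d)) (hX : MemLittleHolder (1 - α) (-r) T X) :
    ∀ τ ∈ Icc (0:ℝ) T,
      Tendsto (fun t => hNorm (1 - α) (-r) 0 (fun s => X (t + s) - X (τ + s)))
        (nhdsWithin τ (Icc 0 T)) (nhds 0) := by
  obtain ⟨⟨_, hbddR⟩, hlim⟩ := hX
  have hβ0 : (0:ℝ) < 1 - α := by linarith [hα.2]
  intro τ hτ
  rw [Metric.tendsto_nhdsWithin_nhds]
  intro ε hε
  obtain ⟨δ₀, hδ₀, hM⟩ := Metric.tendsto_nhdsWithin_nhds.mp hlim (ε/3) (by linarith)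
  set δ : ℝ := min δ₀ 1 / 2 with hδdef
  have hδpos : 0 < δ := by
    have := lt_min hδ₀ one_pos
    simp only [hδdef]; linarith
  have hδ1 : δ ≤ 1 := by
    have : min δ₀ 1 ≤ 1 := min_le_right _ _
    simp only [hδdef]; linarith
  have hδlt : δ < δ₀ := by
    have : min δ₀ 1 ≤ δ₀ := min_le_left _ _
    simp only [hδdef]; linarith
  set M := hSemiD (1 - α) δ (-r) T X with hMdef
  have hMnn : 0 ≤ M := hSemiD_nonneg _ _ _ _ _ hβ0
  have hMlt : M < ε / 3 := by
    have := hM (mem_Ioi.mpr hδpos) (by simpa [Real.dist_eq, abs_of_pos hδpos] using hδlt)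
    have h2 : |hSemiD (1 - α) δ (-r) T X| < ε / 3 := by simpa [Real.dist_eq] using this
    exact lt_of_le_of_lt (le_abs_self _) h2
  refine ⟨δ, hδpos, ?_⟩
  intro t ht hdist
  have hdist' : |t - τ| < δ := by simpa [Real.dist_eq] using hdist
  set g : ℝ → EuclideanSpace ℝ (Fin d) := fun s => X (t + s) - X (τ + s) with hg
  have hpt : ∀ s ∈ Icc (-r) (0:ℝ), ‖g s‖ ≤ M := by
    intro s hs
    have h1 : t + s ∈ Icc (-r) T := ⟨by linarith [hs.1, ht.1], by linarith [hs.2, ht.2]⟩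
    have h2 : τ + s ∈ Icc (-r) T := ⟨by linarith [hs.1, hτ.1], by linarith [hs.2, hτ.2]⟩
    have habs : |(t + s) - (τ + s)| = |t - τ| := by ring_nf
    have hb := holder_pair hβ0 hbddR h2 h1 (by rw [habs]; exact hdist')
    have hle1 : |t - τ| ^ (1 - α) ≤ 1 :=
      Real.rpow_le_one (abs_nonneg _) (by linarith) hβ0.le
    calc ‖g s‖ ≤ M * |(t + s) - (τ + s)| ^ (1 - α) := hb
    _ = M * |t - τ| ^ (1 - α) := by rw [habs]
    _ ≤ M * 1 := mul_le_mul_of_nonneg_left hle1 hMnn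
    _ = M := mul_one M
  have hratio : ∀ c ∈ ratioSet (1 - α) (-r) 0 g, c ≤ 2 * M := by
    rintro c ⟨s, u, hs, hsu, hu0, rfl⟩
    have hupos : (0:ℝ) < (u - s) ^ (1 - α) := Real.rpow_pos_of_pos (by linarith) _
    rw [div_le_iff₀ hupos]
    have hts : t + s ∈ Icc (-r) T := ⟨by linarith [ht.1], by linarith [ht.2]⟩
    have htu : t + u ∈ Icc (-r) T := ⟨by linarith [ht.1], by linarith [ht.2]⟩
    have hτs : τ + s ∈ Icc (-r) T := ⟨by linarith [hτ.1], by linarith [hτ.2]⟩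
    have hτu : τ + u ∈ Icc (-r) T := ⟨by linarith [hτ.1], by linarith [hτ.2]⟩
    rcases le_or_gt (u - s) |t - τ| with hcase | hcase
    · have habs1 : |(t + u) - (t + s)| = u - s := by
        rw [show (t + u) - (t + s) = u - s by ring]; exact abs_of_pos (by linarith)
      have habs2 : |(τ + u) - (τ + s)| = u - s := by
        rw [show (τ + u) - (τ + s) = u - s by ring]; exact abs_of_pos (by linarith)
      have e1 := holder_pair (δ := δ) hβ0 hbddR hts htu (by rw [habs1]; linarith)
      have e2 := holder_pair (δ := δ) hβ0 hbddR hτs hτu (by rw [habs2]; linarith)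
      rw [habs1] at e1; rw [habs2] at e2
      calc ‖g u - g s‖ = ‖(X (t + u) - X (t + s)) - (X (τ + u) - X (τ + s))‖ := by
            simp only [hg]; congr 1; abel
      _ ≤ ‖X (t + u) - X (t + s)‖ + ‖X (τ + u) - X (τ + s)‖ := norm_sub_le _ _
      _ ≤ M * (u - s) ^ (1 - α) + M * (u - s) ^ (1 - α) := add_le_add e1 e2
      _ = 2 * M * (u - s) ^ (1 - α) := by ring
    · have habs1 : |(t + u) - (τ + u)| = |t - τ| := by ring_nf
      have habs2 : |(t + s) - (τ + s)| = |t - τ| := by ring_nf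
      have e1 := holder_pair hβ0 hbddR hτu htu (by rw [habs1]; exact hdist')
      have e2 := holder_pair hβ0 hbddR hτs hts (by rw [habs2]; exact hdist')
      rw [habs1] at e1; rw [habs2] at e2
      have hmono : |t - τ| ^ (1 - α) ≤ (u - s) ^ (1 - α) :=
        Real.rpow_le_rpow (abs_nonneg _) hcase.le hβ0.le
      calc ‖g u - g s‖ = ‖(X (t + u) - X (τ + u)) - (X (t + s) - X (τ + s))‖ := rfl
      _ ≤ ‖X (t + u) - X (τ + u)‖ + ‖X (t + s) - X (τ + s)‖ := norm_sub_le _ _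
      _ ≤ M * |t - τ| ^ (1 - α) + M * |t - τ| ^ (1 - α) := add_le_add e1 e2
      _ = 2 * M * |t - τ| ^ (1 - α) := by ring
      _ ≤ 2 * M * (u - s) ^ (1 - α) :=
            mul_le_mul_of_nonneg_left hmono (by linarith)
  have hne1 : ((fun s => ‖g s‖) '' Icc (-r) (0:ℝ)).Nonempty :=
    ⟨‖g 0‖, ⟨0, ⟨by linarith, le_refl 0⟩, rfl⟩⟩
  have hsup_le : hSup (-r) 0 g ≤ M :=
    csSup_le hne1 (by rintro x ⟨s, hs, rfl⟩; exact hpt s hs)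
  have hsup_nn : 0 ≤ hSup (-r) 0 g := by
    apply Real.sSup_nonneg; rintro x ⟨s, _, rfl⟩; exact norm_nonneg _
  have hne2 : (ratioSet (1 - α) (-r) 0 g).Nonempty :=
    ⟨_, ⟨-r, 0, le_refl _, by linarith, le_refl _, rfl⟩⟩
  have hsemi_le : hSemi (1 - α) (-r) 0 g ≤ 2 * M := csSup_le hne2 hratio
  have hsemi_nn : 0 ≤ hSemi (1 - α) (-r) 0 g := by
    apply Real.sSup_nonneg
    rintro x ⟨s, u, _, hsu, _, rfl⟩
    exact div_nonneg (norm_nonneg _) (Real.rpow_pos_of_pos (by linarith) _).le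
  have hval : hNorm (1 - α) (-r) 0 g = hSup (-r) 0 g + hSemi (1 - α) (-r) 0 g := rfl
  rw [Real.dist_eq, sub_zero, hval, abs_of_nonneg (add_nonneg hsup_nn hsemi_nn)]
  linarith

end
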